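/- For 0 ≤ q < 1 and 0 < q' < 1, every surjective unital *-homomorphism φ : A(S^{2n+1}_q) → A(SU_{q'}(2)) satisfies either φ(z₀) = λα + x or φ(z₀) = λα* + x, for some λ ∈ ℂ with |λ| = 1 and some x in the commutator ideal V₁ of A(SU_{q'}(2)). -/

import Mathlib

noncomputable section

namespace QAlg

/-- Generators of a free *-algebra: `inl i` is the generator `z i`, and
`inr i` is its formal adjoint `(z i)*`. -/
abbrev Gen (X : Type) := X ⊕ X

/-- The free algebra on the doubled generating set, realized as the monoid
algebra of the free monoid. -/
abbrev F (X : Type) := MonoidAlgebra ℂ (FreeMonoid (Gen X))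

/-- The *-operation on words: reverse the word and exchange the two copies
of the generators. -/
def wordStar {X : Type} (w : FreeMonoid (Gen X)) : FreeMonoid (Gen X) :=
  FreeMonoid.ofList (((FreeMonoid.toList w).map Sum.swap).reverse)

lemma wordStar_mul {X : Type} (w v : FreeMonoid (Gen X)) :
    wordStar (w * v) = wordStar v * wordStar w := by
  simp [wordStar, FreeMonoid.toList_mul, FreeMonoid.ofList_append]

lemma wordStar_wordStar {X : Type} (w : FreeMonoid (Gen X)) : wordStar (wordStar w) = w := by
  simp [wordStar, List.map_reverse, List.map_map, Sum.swap_swap_eq]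

/-- The canonical conjugate-linear antimultiplicative involution on the free
algebra `F X`, determined by `star (z i) = (z i)*` and complex conjugation
on scalars. -/
def starF {X : Type} (f : F X) : F X :=
  Finsupp.sum f.coeff fun w c => MonoidAlgebra.single (wordStar w) ((starRingEnd ℂ) c)

lemma starF_single {X : Type} (w : FreeMonoid (Gen X)) (c : ℂ) :
    starF (MonoidAlgebra.single w c) = MonoidAlgebra.single (wordStar w) ((starRingEnd ℂ) c) := by
  classical
  simp [starF]

lemma starF_zero {X : Type} : starF (0 : F X) = 0 := by simp [starF]

lemma starF_add {X : Type} (f g : F X) : starF (f + g) = starF f + starF g := by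
  classical
  unfold starF
  rw [MonoidAlgebra.coeff_add]
  refine Finsupp.sum_add_index' (fun w => by simp) (fun w c₁ c₂ => by
    simp [map_add, Finsupp.single_add])

lemma starF_single_mul {X : Type} (w : FreeMonoid (Gen X)) (c : ℂ) (g : F X) :
    starF (MonoidAlgebra.single w c * g) = starF g * starF (MonoidAlgebra.single w c) := by
  classical
  induction g using MonoidAlgebra.induction with
  | zero => simp [starF_zero]
  | single_add v d g _ _ ihg =>
    rw [mul_add, starF_add, starF_add, add_mul, ihg]
    congr 1
    rw [MonoidAlgebra.single_mul_single, starF_single, starF_single, starF_single,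
      MonoidAlgebra.single_mul_single, wordStar_mul, map_mul, mul_comm]

lemma starF_mul {X : Type} (f g : F X) : starF (f * g) = starF g * starF f := by
  classical
  induction f using MonoidAlgebra.induction with
  | zero => simp [starF_zero]
  | single_add w c f _ _ ih =>
    rw [add_mul, starF_add, starF_add, ih, mul_add, starF_single_mul]

lemma starF_starF {X : Type} (f : F X) : starF (starF f) = f := by
  classical
  induction f using MonoidAlgebra.induction with
  | zero => simp [starF_zero]
  | single_add w c f _ _ ih =>
    rw [starF_add, starF_add, ih, starF_single, starF_single, wordStar_wordStar,
      Complex.conj_conj]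

/-- The free *-algebra structure on `F X`. -/
def starRingF (X : Type) : StarRing (F X) where
  star := starF
  star_involutive := starF_starF
  star_mul := starF_mul
  star_add := starF_add

/-- The generator `z i` inside the free *-algebra. -/
def zF {X : Type} (i : X) : F X := MonoidAlgebra.of ℂ _ (FreeMonoid.of (Sum.inl i))

/-- The formal adjoint `(z i)*` inside the free *-algebra. -/
def zsF {X : Type} (i : X) : F X := MonoidAlgebra.of ℂ _ (FreeMonoid.of (Sum.inr i))

/-- The defining relations of the Vaksman-Soibelman quantum sphere
`S^{2n+1}_q` (with `zsF i` playing the role of `(z i)*`), together with their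
images under the *-operation, so that the quotient below is the universal
unital *-algebra on the generators `z 0, ..., z n` with these relations. -/
inductive srel (n : ℕ) (q : ℝ) : F (Fin (n + 1)) → F (Fin (n + 1)) → Prop
  | comm_zz {i j : Fin (n + 1)} (h : i < j) :
      srel n q (zF j * zF i) ((q : ℂ) • (zF i * zF j))
  | comm_zsz {i j : Fin (n + 1)} (h : i ≠ j) :
      srel n q (zsF i * zF j) ((q : ℂ) • (zF j * zsF i))
  | ccr (i : Fin (n + 1)) :
      srel n q (zsF i * zF i)
        (zF i * zsF i + ((1 - q ^ 2 : ℝ) : ℂ) • ∑ j ∈ Finset.Ioi i, zF j * zsF j)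
  | sphere_eq : srel n q (∑ j, zF j * zsF j) 1
  | star_rel {a b} : srel n q a b → srel n q (starF a) (starF b)

/-- The coordinate *-algebra `A(S^{2n+1}_q)` of the quantum sphere. -/
abbrev Sphere (n : ℕ) (q : ℝ) := RingQuot (srel n q)

noncomputable instance (n : ℕ) (q : ℝ) : StarRing (Sphere n q) :=
  @RingQuot.starRing _ _ (starRingF _) (srel n q) (fun _ _ h => srel.star_rel h)

/-- The generator `z i` of the quantum sphere algebra. -/
def z (n : ℕ) (q : ℝ) (i : Fin (n + 1)) : Sphere n q :=
  RingQuot.mkAlgHom ℂ (srel n q) (zF i)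

/-- The defining relations of quantum `SU(2)` (with `zF 0 = α`, `zF 1 = β`,
`zsF i` playing the role of the adjoint generators), together with their
images under the *-operation. -/
inductive surel (q : ℝ) : F (Fin 2) → F (Fin 2) → Prop
  | r1 : surel q (zF 1 * zF 0) ((q : ℂ) • (zF 0 * zF 1))
  | r2 : surel q (zsF 1 * zF 0) ((q : ℂ) • (zF 0 * zsF 1))
  | r3 : surel q (zF 1 * zsF 1) (zsF 1 * zF 1)
  | r4 : surel q (zF 0 * zsF 0 + zF 1 * zsF 1) 1
  | r5 : surel q (zsF 0 * zF 0 + ((q ^ 2 : ℝ) : ℂ) • (zF 1 * zsF 1)) 1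
  | star_rel {a b} : surel q a b → surel q (starF a) (starF b)

/-- The coordinate *-algebra `A(SU_q(2))`. -/
abbrev SU (q : ℝ) := RingQuot (surel q)

noncomputable instance (q : ℝ) : StarRing (SU q) :=
  @RingQuot.starRing _ _ (starRingF _) (surel q) (fun _ _ h => surel.star_rel h)

/-- The generator `α` of `A(SU_q(2))`. -/
def αg (q : ℝ) : SU q := RingQuot.mkAlgHom ℂ (surel q) (zF 0)

/-- The generator `β` of `A(SU_q(2))`. -/
def βg (q : ℝ) : SU q := RingQuot.mkAlgHom ℂ (surel q) (zF 1)

/-- The elements `e_{j,k,l}` of `A(SU_q(2))`: `α^j β^k (β*)^l` for `j ≥ 0`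
and `β^k (β*)^l (α*)^{-j}` for `j < 0`. -/
def e (q : ℝ) (j : ℤ) (k l : ℕ) : SU q :=
  if 0 ≤ j then αg q ^ j.toNat * βg q ^ k * star (βg q) ^ l
  else βg q ^ k * star (βg q) ^ l * star (αg q) ^ (-j).toNat

/-- The subspace `V_m ⊆ A(SU_q(2))` spanned by the `e_{j,k,l}` with `k + l ≥ m`. -/
def V (q : ℝ) (m : ℕ) : Submodule ℂ (SU q) :=
  Submodule.span ℂ {x | ∃ (j : ℤ) (k l : ℕ), m ≤ k + l ∧ x = e q j k l}

set_option linter.dupNamespace false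

lemma wordStar_of_inl {X : Type} (i : X) :
    wordStar (FreeMonoid.of (Sum.inl i) : FreeMonoid (Gen X)) = FreeMonoid.of (Sum.inr i) := rfl

lemma wordStar_of_inr {X : Type} (i : X) :
    wordStar (FreeMonoid.of (Sum.inr i) : FreeMonoid (Gen X)) = FreeMonoid.of (Sum.inl i) := rfl

lemma starF_zF {X : Type} (i : X) : starF (zF i) = zsF i := by
  simp [zF, zsF, MonoidAlgebra.of_apply, starF_single, wordStar_of_inl]

lemma starF_zsF {X : Type} (i : X) : starF (zsF i) = zF i := by
  simp [zF, zsF, MonoidAlgebra.of_apply, starF_single, wordStar_of_inr]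

lemma starF_smul {X : Type} (c : ℂ) (f : F X) :
    starF (c • f) = (starRingEnd ℂ) c • starF f := by
  classical
  unfold starF
  rw [MonoidAlgebra.coeff_smul, Finsupp.sum_smul_index' (fun w => by simp), Finsupp.smul_sum]
  refine Finsupp.sum_congr fun w hw => ?_
  rw [smul_eq_mul, map_mul, MonoidAlgebra.smul_single, smul_eq_mul]

lemma su_star_mk (q : ℝ) (f : F (Fin 2)) :
    star (RingQuot.mkAlgHom ℂ (surel q) f) = RingQuot.mkAlgHom ℂ (surel q) (starF f) := by
  have h : ∀ g : F (Fin 2), RingQuot.mkAlgHom ℂ (surel q) g = ⟨Quot.mk _ g⟩ := by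
    intro g
    have := DFunLike.congr_fun (RingQuot.mkAlgHom_coe ℂ (surel q)) g
    rw [RingQuot.mkRingHom_def] at this
    exact this
  rw [h, h]
  letI : StarRing (F (Fin 2)) := starRingF _
  rfl

lemma sp_star_mk (n : ℕ) (q : ℝ) (f : F (Fin (n+1))) :
    star (RingQuot.mkAlgHom ℂ (srel n q) f) = RingQuot.mkAlgHom ℂ (srel n q) (starF f) := by
  have h : ∀ g : F (Fin (n+1)), RingQuot.mkAlgHom ℂ (srel n q) g = ⟨Quot.mk _ g⟩ := by
    intro g
    have := DFunLike.congr_fun (RingQuot.mkAlgHom_coe ℂ (srel n q)) g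
    rw [RingQuot.mkRingHom_def] at this
    exact this
  rw [h, h]
  letI : StarRing (F (Fin (n+1))) := starRingF _
  rfl

lemma star_z (n : ℕ) (q : ℝ) (i : Fin (n+1)) :
    star (z n q i) = RingQuot.mkAlgHom ℂ (srel n q) (zsF i) := by
  rw [z, sp_star_mk, starF_zF]

section SUrel

variable (q : ℝ)

local notation "A" => αg q
local notation "B" => βg q
local notation "As" => star (αg q)
local notation "Bs" => star (βg q)

lemma star_αg : As = RingQuot.mkAlgHom ℂ (surel q) (zsF 0) := by
  rw [αg, su_star_mk, starF_zF]

lemma star_βg : Bs = RingQuot.mkAlgHom ℂ (surel q) (zsF 1) := by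
  rw [βg, su_star_mk, starF_zF]

lemma relBA : B * A = (q : ℂ) • (A * B) := by
  have := RingQuot.mkAlgHom_rel ℂ (surel.r1 (q := q))
  rw [map_mul, map_smul, map_mul] at this
  exact this

lemma relBsA : Bs * A = (q : ℂ) • (A * Bs) := by
  have := RingQuot.mkAlgHom_rel ℂ (surel.r2 (q := q))
  rw [map_mul, map_smul, map_mul] at this
  rw [star_βg]
  exact this

lemma relBBs : B * Bs = Bs * B := by
  have := RingQuot.mkAlgHom_rel ℂ (surel.r3 (q := q))
  rw [map_mul, map_mul] at this
  rw [star_βg]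
  exact this

lemma relAAs : A * As + B * Bs = 1 := by
  have := RingQuot.mkAlgHom_rel ℂ (surel.r4 (q := q))
  rw [map_add, map_mul, map_mul, map_one] at this
  rw [star_αg, star_βg]
  exact this

lemma relAsA : As * A + ((q^2 : ℝ) : ℂ) • (B * Bs) = 1 := by
  have := RingQuot.mkAlgHom_rel ℂ (surel.r5 (q := q))
  rw [map_add, map_mul, map_smul, map_mul, map_one] at this
  rw [star_αg, star_βg]
  exact this

lemma relAsB : As * B = (q : ℂ) • (B * As) := by
  have := RingQuot.mkAlgHom_rel ℂ (surel.star_rel (surel.r2 (q := q)))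
  simp only [starF_mul, starF_smul, starF_zF, starF_zsF, map_smul, map_mul] at this
  rw [star_αg, βg]
  simpa [Complex.conj_ofReal] using this

lemma relAsBs : As * Bs = (q : ℂ) • (Bs * As) := by
  have := RingQuot.mkAlgHom_rel ℂ (surel.star_rel (surel.r1 (q := q)))
  simp only [starF_mul, starF_smul, starF_zF, starF_zsF, map_smul, map_mul] at this
  rw [star_αg, star_βg]
  simpa [Complex.conj_ofReal] using this

end SUrel

section PowAux

variable {R : Type*} [Ring R] (c : ℂ) [Module ℂ R] [SMulCommClass ℂ R R] [IsScalarTower ℂ R R]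

lemma comm_pow_aux {x y : R} (h : y * x = c • (x * y)) (m : ℕ) :
    y * x ^ m = c ^ m • (x ^ m * y) := by
  induction m with
  | zero => simp
  | succ m ih =>
    rw [pow_succ, ← mul_assoc, ih, smul_mul_assoc, mul_assoc, h, mul_smul_comm, smul_smul,
      ← pow_succ, pow_succ, mul_assoc]

lemma comm_pow_aux' {x y : R} (h : y * x = c • (x * y)) (m : ℕ) :
    y ^ m * x = c ^ m • (x * y ^ m) := by
  induction m with
  | zero => simp
  | succ m ih =>
    rw [pow_succ, mul_assoc, h, mul_smul_comm, ← mul_assoc, ih, smul_mul_assoc, smul_smul,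
      ← pow_succ', mul_assoc]

end PowAux

section SUrel2

variable (q : ℝ)

local notation "A" => αg q
local notation "B" => βg q
local notation "As" => star (αg q)
local notation "Bs" => star (βg q)

lemma commBBs : Commute B Bs := relBBs q

lemma B_Apow (m : ℕ) : B * A ^ m = ((q:ℂ)) ^ m • (A ^ m * B) := comm_pow_aux _ (relBA q) m

lemma Bs_Apow (m : ℕ) : Bs * A ^ m = ((q:ℂ)) ^ m • (A ^ m * Bs) := comm_pow_aux _ (relBsA q) m

lemma As_Bpow (k : ℕ) : As * B ^ k = ((q:ℂ)) ^ k • (B ^ k * As) := comm_pow_aux _ (relAsB q) k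

lemma As_Bspow (l : ℕ) : As * Bs ^ l = ((q:ℂ)) ^ l • (Bs ^ l * As) := comm_pow_aux _ (relAsBs q) l

lemma Bpow_A (k : ℕ) : B ^ k * A = ((q:ℂ)) ^ k • (A * B ^ k) := comm_pow_aux' _ (relBA q) k

lemma Bspow_A (l : ℕ) : Bs ^ l * A = ((q:ℂ)) ^ l • (A * Bs ^ l) := comm_pow_aux' _ (relBsA q) l

lemma A_As_eq : A * As = 1 - B * Bs :=
  eq_sub_of_add_eq (relAAs q)

lemma As_A_eq : As * A = 1 - ((q^2 : ℝ) : ℂ) • (B * Bs) :=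
  eq_sub_of_add_eq (relAsA q)

lemma A_Aspow (m : ℕ) : A * As ^ (m + 1) = As ^ m - (B * Bs) * As ^ m := by
  rw [pow_succ', ← mul_assoc, A_As_eq, sub_mul, one_mul]

lemma As_Apow (t : ℕ) : As * A ^ (t + 1) = A ^ t - ((q^2 : ℝ) : ℂ) • ((B * Bs) * A ^ t) := by
  rw [pow_succ', ← mul_assoc, As_A_eq, sub_mul, one_mul, smul_mul_assoc]

lemma BkBsl_A (k l : ℕ) : (B ^ k * Bs ^ l) * A = ((q:ℂ)) ^ (k + l) • (A * (B ^ k * Bs ^ l)) := by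
  rw [mul_assoc, Bspow_A, mul_smul_comm, ← mul_assoc, Bpow_A, smul_mul_assoc, smul_smul,
    ← pow_add, mul_assoc, add_comm k l]

lemma As_BkBsl (k l : ℕ) : As * (B ^ k * Bs ^ l) = ((q:ℂ)) ^ (k + l) • ((B ^ k * Bs ^ l) * As) := by
  rw [← mul_assoc, As_Bpow, smul_mul_assoc, mul_assoc, As_Bspow, mul_smul_comm, smul_smul,
    ← pow_add, mul_assoc]

lemma BBs_Apow (t : ℕ) : (B * Bs) * A ^ t = ((q:ℂ)) ^ (2 * t) • (A ^ t * (B * Bs)) := by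
  rw [mul_assoc, Bs_Apow, mul_smul_comm, ← mul_assoc, B_Apow, smul_mul_assoc, smul_smul,
    ← pow_add, mul_assoc, two_mul]

lemma BBs_merge (k l : ℕ) : (B * Bs) * (B ^ k * Bs ^ l) = B ^ (k + 1) * Bs ^ (l + 1) := by
  rw [mul_assoc B Bs, ← mul_assoc Bs, ((commBBs q).symm.pow_right k).eq, mul_assoc,
    ← mul_assoc B, ← pow_succ', ← mul_assoc, mul_assoc _ Bs, ← pow_succ']

lemma BBs_merge' (k l : ℕ) : (B ^ k * Bs ^ l) * (B * Bs) = B ^ (k + 1) * Bs ^ (l + 1) := by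
  rw [mul_assoc (B ^ k), ← mul_assoc (Bs ^ l), ((commBBs q).symm.pow_left l).eq,
    mul_assoc B (Bs ^ l) Bs, ← mul_assoc (B ^ k) B, ← pow_succ, ← pow_succ]

end SUrel2

section Erel

variable (q : ℝ)

local notation "A" => αg q
local notation "B" => βg q
local notation "As" => star (αg q)
local notation "Bs" => star (βg q)

lemma e_nonneg {j : ℤ} (hj : 0 ≤ j) (k l : ℕ) :
    e q j k l = A ^ j.toNat * B ^ k * Bs ^ l := by
  rw [e, if_pos hj]

lemma e_nonpos {j : ℤ} (hj : j ≤ 0) (k l : ℕ) :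
    e q j k l = B ^ k * Bs ^ l * As ^ (-j).toNat := by
  rcases lt_or_eq_of_le hj with h | h
  · rw [e, if_neg (by omega)]
  · subst h
    rw [e, if_pos le_rfl]
    norm_num

lemma MB (j : ℤ) (k l : ℕ) : B * e q j k l = ((q:ℂ)) ^ j.toNat • e q j (k + 1) l := by
  rcases le_or_gt 0 j with hj | hj
  · rw [e_nonneg q hj, e_nonneg q hj, ← mul_assoc, ← mul_assoc, B_Apow, smul_mul_assoc,
      smul_mul_assoc, mul_assoc (αg q ^ j.toNat) (βg q) (βg q ^ k), ← pow_succ']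
  · rw [e_nonpos q hj.le, e_nonpos q hj.le, show j.toNat = 0 by omega, pow_zero, one_smul,
      ← mul_assoc, ← mul_assoc, ← pow_succ']

lemma MBs (j : ℤ) (k l : ℕ) : Bs * e q j k l = ((q:ℂ)) ^ j.toNat • e q j k (l + 1) := by
  rcases le_or_gt 0 j with hj | hj
  · rw [e_nonneg q hj, e_nonneg q hj, ← mul_assoc, ← mul_assoc, Bs_Apow, smul_mul_assoc,
      smul_mul_assoc, mul_assoc (αg q ^ j.toNat) (star (βg q)) (βg q ^ k),
      ((commBBs q).symm.pow_right k).eq,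
      mul_assoc (αg q ^ j.toNat) (βg q ^ k * star (βg q)) (star (βg q) ^ l),
      mul_assoc (βg q ^ k) (star (βg q)) (star (βg q) ^ l), ← pow_succ',
      ← mul_assoc (αg q ^ j.toNat)]
  · rw [e_nonpos q hj.le, e_nonpos q hj.le, show j.toNat = 0 by omega, pow_zero, one_smul,
      ← mul_assoc, ← mul_assoc, ((commBBs q).symm.pow_right k).eq,
      mul_assoc (βg q ^ k) (star (βg q)) (star (βg q) ^ l), ← pow_succ']

lemma MA_nonneg {j : ℤ} (hj : 0 ≤ j) (k l : ℕ) : A * e q j k l = e q (j + 1) k l := by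
  rw [e_nonneg q hj, e_nonneg q (by omega : (0:ℤ) ≤ j + 1), show (j+1).toNat = j.toNat + 1 by omega,
    ← mul_assoc, ← mul_assoc, ← pow_succ']

lemma MA_neg {j : ℤ} (hj : j < 0) (k l : ℕ) :
    ((q:ℂ)) ^ (k + l) • (A * e q j k l) = e q (j + 1) k l - e q (j + 1) (k + 1) (l + 1) := by
  obtain ⟨m', hm'⟩ : ∃ m', (-j).toNat = m' + 1 := ⟨(-j).toNat - 1, by omega⟩
  have h1 : (-(j+1)).toNat = m' := by omega
  rw [e_nonpos q hj.le, e_nonpos q (by omega : j + 1 ≤ 0), e_nonpos q (by omega : j + 1 ≤ 0),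
    hm', h1, ← mul_assoc, ← smul_mul_assoc, ← BkBsl_A, mul_assoc, A_Aspow, mul_sub,
    ← mul_assoc (βg q ^ k * star (βg q) ^ l) (βg q * star (βg q)), BBs_merge']

lemma MAs_nonpos {j : ℤ} (hj : j ≤ 0) (k l : ℕ) :
    As * e q j k l = ((q:ℂ)) ^ (k + l) • e q (j - 1) k l := by
  have h1 : (-(j-1)).toNat = (-j).toNat + 1 := by omega
  rw [e_nonpos q hj, e_nonpos q (by omega : j - 1 ≤ 0), h1, ← mul_assoc, As_BkBsl,
    smul_mul_assoc, mul_assoc, ← pow_succ']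

lemma MAs_pos {j : ℤ} (hj : 0 < j) (k l : ℕ) :
    As * e q j k l = e q (j - 1) k l
      - ((q:ℂ)) ^ (2 * j.toNat) • e q (j - 1) (k + 1) (l + 1) := by
  obtain ⟨t', ht'⟩ : ∃ t', j.toNat = t' + 1 := ⟨j.toNat - 1, by omega⟩
  have h1 : (j - 1).toNat = t' := by omega
  have h2 : ((q:ℂ))^2 * ((q:ℂ))^(2*t') = ((q:ℂ))^(2*(t'+1)) := by
    rw [← pow_add]; ring_nf
  have h3 : ((q^2 : ℝ) : ℂ) = ((q:ℂ))^2 := by push_cast; ring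
  rw [e_nonneg q hj.le, e_nonneg q (by omega : (0:ℤ) ≤ j - 1),
    e_nonneg q (by omega : (0:ℤ) ≤ j - 1), ht', h1, ← mul_assoc, ← mul_assoc, As_Apow, sub_mul,
    sub_mul, smul_mul_assoc, smul_mul_assoc,
    BBs_Apow, smul_mul_assoc, smul_mul_assoc, smul_smul, h3, h2,
    mul_assoc (αg q ^ t') (βg q * star (βg q)) (βg q ^ k),
    mul_assoc (αg q ^ t') (βg q * star (βg q) * βg q ^ k) (star (βg q) ^ l),
    mul_assoc (βg q * star (βg q)) (βg q ^ k) (star (βg q) ^ l), BBs_merge,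
    ← mul_assoc (αg q ^ t')]

lemma e_mem_V (j : ℤ) (k l m : ℕ) (h : m ≤ k + l) : e q j k l ∈ V q m :=
  Submodule.subset_span ⟨j, k, l, h, rfl⟩

lemma hqpow_ne {q : ℝ} (hq : q ≠ 0) (m : ℕ) : ((q:ℂ)) ^ m ≠ 0 := by
  simp [Complex.ofReal_ne_zero.mpr hq]

lemma mulA_mem_V1 (hq : q ≠ 0) {x : SU q} (hx : x ∈ V q 1) : A * x ∈ V q 1 := by
  induction hx using Submodule.span_induction with
  | mem x hx =>
    obtain ⟨j, k, l, hkl, rfl⟩ := hx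
    rcases le_or_gt 0 j with hj | hj
    · rw [MA_nonneg q hj]
      exact e_mem_V q _ _ _ _ hkl
    · rw [← Submodule.smul_mem_iff _ (hqpow_ne hq (k + l)), MA_neg q hj]
      exact sub_mem (e_mem_V q _ _ _ _ hkl) (e_mem_V q _ _ _ _ (by omega))
  | zero => simp
  | add x y _ _ hx hy => rw [mul_add]; exact add_mem hx hy
  | smul c x _ hx => rw [mul_smul_comm]; exact Submodule.smul_mem _ _ hx

lemma mulAs_mem_V1 {x : SU q} (hx : x ∈ V q 1) : As * x ∈ V q 1 := by
  induction hx using Submodule.span_induction with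
  | mem x hx =>
    obtain ⟨j, k, l, hkl, rfl⟩ := hx
    rcases le_or_gt 0 j with hj | hj
    · rcases lt_or_eq_of_le hj with hj' | hj'
      · rw [MAs_pos q hj']
        exact sub_mem (e_mem_V q _ _ _ _ hkl) (Submodule.smul_mem _ _ (e_mem_V q _ _ _ _ (by omega)))
      · rw [MAs_nonpos q (by omega)]
        exact Submodule.smul_mem _ _ (e_mem_V q _ _ _ _ hkl)
    · rw [MAs_nonpos q hj.le]
      exact Submodule.smul_mem _ _ (e_mem_V q _ _ _ _ hkl)
  | zero => simp
  | add x y _ _ hx hy => rw [mul_add]; exact add_mem hx hy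
  | smul c x _ hx => rw [mul_smul_comm]; exact Submodule.smul_mem _ _ hx

lemma mulB_mem_V1 {x : SU q} (hx : x ∈ V q 1) : B * x ∈ V q 1 := by
  induction hx using Submodule.span_induction with
  | mem x hx =>
    obtain ⟨j, k, l, hkl, rfl⟩ := hx
    rw [MB]
    exact Submodule.smul_mem _ _ (e_mem_V q _ _ _ _ (by omega))
  | zero => simp
  | add x y _ _ hx hy => rw [mul_add]; exact add_mem hx hy
  | smul c x _ hx => rw [mul_smul_comm]; exact Submodule.smul_mem _ _ hx

lemma mulBs_mem_V1 {x : SU q} (hx : x ∈ V q 1) : Bs * x ∈ V q 1 := by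
  induction hx using Submodule.span_induction with
  | mem x hx =>
    obtain ⟨j, k, l, hkl, rfl⟩ := hx
    rw [MBs]
    exact Submodule.smul_mem _ _ (e_mem_V q _ _ _ _ (by omega))
  | zero => simp
  | add x y _ _ hx hy => rw [mul_add]; exact add_mem hx hy
  | smul c x _ hx => rw [mul_smul_comm]; exact Submodule.smul_mem _ _ hx

end Erel

section Laurent

/-- The Laurent polynomial algebra, target of the abelianization map. -/
abbrev L : Type := AddMonoidAlgebra ℂ ℤ

def T (m : ℤ) : L := AddMonoidAlgebra.single m 1

lemma T_mul (m m' : ℤ) : T m * T m' = T (m + m') := by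
  rw [T, T, T, AddMonoidAlgebra.single_mul_single, one_mul]

lemma T_pow (t : ℕ) : T 1 ^ t = T t := by
  rw [T, T, AddMonoidAlgebra.single_pow, one_pow]
  congr 1
  rw [nsmul_eq_mul, mul_one]

lemma Tneg_pow (t : ℕ) : T (-1) ^ t = T (-(t:ℤ)) := by
  rw [T, T, AddMonoidAlgebra.single_pow, one_pow]
  congr 1
  rw [nsmul_eq_mul, mul_neg_one]

lemma one_eq_T : (1 : L) = T 0 := by
  rw [T, AddMonoidAlgebra.one_def]

def starL (f : L) : L := Finsupp.sum f.coeff fun n c => AddMonoidAlgebra.single (-n) ((starRingEnd ℂ) c)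

lemma starL_single (m : ℤ) (c : ℂ) :
    starL (AddMonoidAlgebra.single m c) = AddMonoidAlgebra.single (-m) ((starRingEnd ℂ) c) :=
  by unfold starL; rw [AddMonoidAlgebra.coeff_single]; exact Finsupp.sum_single_index (by simp)

lemma starL_zero : starL 0 = 0 := by
  unfold starL; rw [AddMonoidAlgebra.coeff_zero]; exact Finsupp.sum_zero_index

lemma starL_one : starL 1 = 1 := by
  rw [AddMonoidAlgebra.one_def, starL_single]
  simp

lemma starL_add (f g : L) : starL (f + g) = starL f + starL g := by
  unfold starL; rw [AddMonoidAlgebra.coeff_add]; exact Finsupp.sum_add_index' (fun w => by simp) (fun w c₁ c₂ => by simp [Finsupp.single_add])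

lemma starL_smul (c : ℂ) (f : L) : starL (c • f) = (starRingEnd ℂ) c • starL f := by
  unfold starL
  rw [AddMonoidAlgebra.coeff_smul, Finsupp.sum_smul_index' (fun w => by simp), Finsupp.smul_sum]
  refine Finsupp.sum_congr fun w hw => ?_
  rw [smul_eq_mul, map_mul, AddMonoidAlgebra.smul_single, smul_eq_mul]

lemma starL_single_mul (m : ℤ) (c : ℂ) (g : L) :
    starL (AddMonoidAlgebra.single m c * g) = starL (AddMonoidAlgebra.single m c) * starL g := by
  classical
  induction g using AddMonoidAlgebra.induction with
  | zero => simp [starL_zero]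
  | single_add v d g _ _ ihg =>
    rw [mul_add, starL_add, starL_add, mul_add, ihg]
    congr 1
    rw [AddMonoidAlgebra.single_mul_single, starL_single, starL_single, starL_single,
      AddMonoidAlgebra.single_mul_single, map_mul, neg_add]

lemma starL_mul (f g : L) : starL (f * g) = starL f * starL g := by
  classical
  induction f using AddMonoidAlgebra.induction with
  | zero => simp [starL_zero]
  | single_add w c f _ _ ih =>
    rw [add_mul, starL_add, starL_add, ih, add_mul, starL_single_mul]

lemma starL_apply (f : L) (m : ℤ) : (starL f).coeff m = (starRingEnd ℂ) (f.coeff (-m)) := by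
  classical
  rw [starL, AddMonoidAlgebra.coeff_finsuppSum, Finsupp.sum_apply]
  rw [Finsupp.sum]
  have : ∀ n ∈ f.coeff.support, (AddMonoidAlgebra.single (-n) ((starRingEnd ℂ) (f.coeff n)) : L).coeff m
      = if n = -m then (starRingEnd ℂ) (f.coeff n) else 0 := by
    intro n _
    rw [AddMonoidAlgebra.coeff_single, Finsupp.single_apply]
    congr 1
    simp only [eq_iff_iff]
    omega
  rw [Finset.sum_congr rfl this, Finset.sum_ite_eq' f.coeff.support (-m) (fun n => (starRingEnd ℂ) (f.coeff n))]
  split_ifs with h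
  · rfl
  · rw [Finsupp.notMem_support_iff.mp h, map_zero]

lemma starL_support (f : L) (m : ℤ) : m ∈ (starL f).coeff.support ↔ -m ∈ f.coeff.support := by
  simp [Finsupp.mem_support_iff, starL_apply]

/-- the images of the free generators in `L` -/
def gL : Gen (Fin 2) → L :=
  Sum.elim (fun i => if i = 0 then T 1 else 0) (fun i => if i = 0 then T (-1) else 0)

lemma starL_gL (x : Gen (Fin 2)) : starL (gL x) = gL (Sum.swap x) := by
  have h1 : starL (T 1) = T (-1) := by rw [T, T, starL_single, map_one]
  have h2 : starL (T (-1)) = T 1 := by rw [T, T, starL_single, map_one, neg_neg]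
  rcases x with i | i <;> fin_cases i
  · simp only [gL, Sum.swap_inl, Sum.elim_inl, Sum.elim_inr]
    rw [if_pos (by decide), if_pos (by decide)]
    exact h1
  · simp only [gL, Sum.swap_inl, Sum.elim_inl, Sum.elim_inr]
    rw [if_neg (by decide), if_neg (by decide), starL_zero]
  · simp only [gL, Sum.swap_inr, Sum.elim_inl, Sum.elim_inr]
    rw [if_pos (by decide), if_pos (by decide)]
    exact h2
  · simp only [gL, Sum.swap_inr, Sum.elim_inl, Sum.elim_inr]
    rw [if_neg (by decide), if_neg (by decide), starL_zero]

/-- The algebra map from the free *-algebra to `L`. -/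
def toL : F (Fin 2) →ₐ[ℂ] L :=
  MonoidAlgebra.lift ℂ L (FreeMonoid (Gen (Fin 2))) (FreeMonoid.lift gL)

lemma wordStar_of {X : Type} (x : Gen X) :
    wordStar (FreeMonoid.of x) = FreeMonoid.of (Sum.swap x) := rfl

lemma starL_lift_word (w : FreeMonoid (Gen (Fin 2))) :
    starL (FreeMonoid.lift gL w) = FreeMonoid.lift gL (wordStar w) := by
  induction w using FreeMonoid.inductionOn' with
  | one =>
    simp only [map_one, starL_one]
    have : wordStar (1 : FreeMonoid (Gen (Fin 2))) = 1 := rfl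
    rw [this, map_one]
  | of_mul b w ih =>
    rw [map_mul, starL_mul, ih, wordStar_mul, map_mul, wordStar_of, FreeMonoid.lift_eval_of,
      FreeMonoid.lift_eval_of, starL_gL, mul_comm]

lemma toL_single (w : FreeMonoid (Gen (Fin 2))) (c : ℂ) :
    toL (MonoidAlgebra.single w c) = c • FreeMonoid.lift gL w := by
  rw [toL, MonoidAlgebra.lift_single]

lemma toL_starF (f : F (Fin 2)) : toL (starF f) = starL (toL f) := by
  classical
  induction f using MonoidAlgebra.induction with
  | zero => rw [starF_zero, map_zero, starL_zero]
  | single_add w c f _ _ ih =>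
    rw [starF_add, map_add, map_add, starL_add, ih, starF_single, toL_single, toL_single,
      starL_smul, starL_lift_word]

lemma toL_zF0 : toL (zF 0) = T 1 := by
  rw [show zF (0 : Fin 2) = MonoidAlgebra.single (FreeMonoid.of (Sum.inl 0)) 1 from rfl,
    toL_single, one_smul, FreeMonoid.lift_eval_of]
  simp [gL]

lemma toL_zF1 : toL (zF 1) = 0 := by
  rw [show zF (1 : Fin 2) = MonoidAlgebra.single (FreeMonoid.of (Sum.inl 1)) 1 from rfl,
    toL_single, one_smul, FreeMonoid.lift_eval_of]
  simp [gL]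

lemma toL_zsF0 : toL (zsF 0) = T (-1) := by
  rw [show zsF (0 : Fin 2) = MonoidAlgebra.single (FreeMonoid.of (Sum.inr 0)) 1 from rfl,
    toL_single, one_smul, FreeMonoid.lift_eval_of]
  simp [gL]

lemma toL_zsF1 : toL (zsF 1) = 0 := by
  rw [show zsF (1 : Fin 2) = MonoidAlgebra.single (FreeMonoid.of (Sum.inr 1)) 1 from rfl,
    toL_single, one_smul, FreeMonoid.lift_eval_of]
  simp [gL]

lemma toL_rel (q : ℝ) : ∀ ⦃a b : F (Fin 2)⦄, surel q a b → toL a = toL b := by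
  intro a b h
  induction h with
  | r1 => rw [map_mul, map_smul, map_mul, toL_zF0, toL_zF1, mul_zero, zero_mul, smul_zero]
  | r2 => rw [map_mul, map_smul, map_mul, toL_zF0, toL_zsF1, mul_zero, zero_mul, smul_zero]
  | r3 => rw [map_mul, map_mul, toL_zF1, toL_zsF1, mul_zero]
  | r4 => rw [map_add, map_mul, map_mul, toL_zF0, toL_zsF0, toL_zF1, toL_zsF1, mul_zero, add_zero,
      T_mul, map_one, one_eq_T]; norm_num
  | r5 => rw [map_add, map_mul, map_smul, map_mul, toL_zsF0, toL_zF0, toL_zF1, toL_zsF1, mul_zero,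
      smul_zero, add_zero, T_mul, map_one, one_eq_T]; norm_num
  | star_rel _ ih => rw [toL_starF, toL_starF, ih]

/-- The abelianization map `A(SU_q(2)) → L`. -/
def piL (q : ℝ) : SU q →ₐ[ℂ] L := RingQuot.liftAlgHom ℂ ⟨toL, toL_rel q⟩

lemma piL_mk (q : ℝ) (f : F (Fin 2)) :
    piL q (RingQuot.mkAlgHom ℂ (surel q) f) = toL f :=
  RingQuot.liftAlgHom_mkAlgHom_apply _ _ _ _

lemma piL_star (q : ℝ) (y : SU q) : piL q (star y) = starL (piL q y) := by
  obtain ⟨f, rfl⟩ := RingQuot.mkAlgHom_surjective ℂ (surel q) y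
  rw [su_star_mk, piL_mk, piL_mk, toL_starF]

lemma piL_A (q : ℝ) : piL q (αg q) = T 1 := by rw [αg, piL_mk, toL_zF0]

lemma piL_B (q : ℝ) : piL q (βg q) = 0 := by rw [βg, piL_mk, toL_zF1]

lemma piL_As (q : ℝ) : piL q (star (αg q)) = T (-1) := by
  rw [star_αg, piL_mk, toL_zsF0]

lemma piL_Bs (q : ℝ) : piL q (star (βg q)) = 0 := by
  rw [star_βg, piL_mk, toL_zsF1]

lemma piL_surjective (q : ℝ) : Function.Surjective (piL q) := by
  intro f
  suffices h : f ∈ (piL q).range by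
    obtain ⟨x, hx⟩ := h
    exact ⟨x, hx⟩
  induction f using AddMonoidAlgebra.induction with
  | zero => exact zero_mem _
  | single_add m c f _ _ ih =>
    refine add_mem ?_ ih
    have h1 : (AddMonoidAlgebra.single m c : L) = c • T m := by
      rw [T, AddMonoidAlgebra.smul_single, smul_eq_mul, mul_one]
    rw [h1]
    refine Subalgebra.smul_mem _ ?_ c
    rcases le_or_gt 0 m with hm | hm
    · have hh : piL q (αg q ^ m.toNat) = T m := by
        rw [map_pow, piL_A, T_pow]
        congr 1
        omega
      exact ⟨_, hh⟩
    · have hh : piL q (star (αg q) ^ (-m).toNat) = T m := by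
        rw [map_pow, piL_As, Tneg_pow]
        congr 1
        omega
      exact ⟨_, hh⟩

end Laurent

section Positivity

lemma mul_starL_apply_zero (f : L) :
    (f * starL f).coeff 0 = ∑ a ∈ f.coeff.support, ((Complex.normSq (f.coeff a) : ℝ) : ℂ) := by
  classical
  rw [AddMonoidAlgebra.coeff_mul, Finsupp.sum]
  refine Finset.sum_congr rfl fun a ha => ?_
  rw [Finsupp.sum]
  have step : ∀ m ∈ (starL f).coeff.support, (if a + m = 0 then f.coeff a * (starL f).coeff m else 0)
      = if m = -a then f.coeff a * (starL f).coeff m else 0 := by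
    intro m _
    congr 1
    simp only [eq_iff_iff]
    omega
  rw [Finset.sum_congr rfl step,
    Finset.sum_ite_eq' (starL f).coeff.support (-a) (fun m => f.coeff a * (starL f).coeff m)]
  have hmem : -a ∈ (starL f).coeff.support := by
    rw [starL_support, neg_neg]
    exact ha
  rw [if_pos hmem, starL_apply, neg_neg, Complex.mul_conj]

lemma eq_zero_of_sum_mul_star {ι : Type*} (s : Finset ι) (v : ι → L)
    (h : ∑ i ∈ s, v i * starL (v i) = 0) : ∀ i ∈ s, v i = 0 := by
  classical
  have h1 : ∑ i ∈ s, (v i * starL (v i)).coeff 0 = 0 := by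
    rw [← Finset.sum_apply', ← AddMonoidAlgebra.coeff_sum, h]
    rfl
  have h2 : ∑ i ∈ s, ∑ a ∈ (v i).coeff.support, ((Complex.normSq ((v i).coeff a) : ℝ) : ℂ) = 0 := by
    rw [← Finset.sum_congr rfl fun i _ => mul_starL_apply_zero (v i)]
    exact h1
  have h3 : ∑ i ∈ s, ∑ a ∈ (v i).coeff.support, Complex.normSq ((v i).coeff a) = 0 := by
    exact_mod_cast h2
  have h4 := (Finset.sum_eq_zero_iff_of_nonneg
    (fun i _ => Finset.sum_nonneg fun a _ => Complex.normSq_nonneg _)).mp h3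
  intro i hi
  have h5 := (Finset.sum_eq_zero_iff_of_nonneg
    (fun a _ => Complex.normSq_nonneg _)).mp (h4 i hi)
  ext a
  by_cases ha : a ∈ (v i).coeff.support
  · exact Complex.normSq_eq_zero.mp (h5 a ha)
  · exact Finsupp.notMem_support_iff.mp ha

lemma eq_single_of_mul_star_eq_one {f : L} (h : f * starL f = 1) :
    ∃ (d : ℤ) (c : ℂ), f = AddMonoidAlgebra.single d c ∧ c * (starRingEnd ℂ) c = 1 := by
  classical
  have hf : f ≠ 0 := by
    rintro rfl
    rw [starL_zero, mul_zero] at h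
    exact one_ne_zero h.symm
  have hs : f.coeff.support.Nonempty :=
    Finsupp.support_nonempty_iff.mpr (fun h0 => hf (AddMonoidAlgebra.coeff_eq_zero.mp h0))
  set d := f.coeff.support.max' hs with hd
  set e := f.coeff.support.min' hs with he
  have hu : UniqueAdd f.coeff.support (starL f).coeff.support d (-e) := by
    intro a b ha hb hab
    have hb' : -b ∈ f.coeff.support := (starL_support f b).mp hb
    have h1 : a ≤ d := Finset.le_max' _ _ ha
    have h2 : e ≤ -b := Finset.min'_le _ _ hb'
    constructor <;> omega
  have hcoeff := AddMonoidAlgebra.coeff_mul_add_of_uniqueAdd hu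
  rw [h] at hcoeff
  have hd0 : f.coeff d ≠ 0 := Finsupp.mem_support_iff.mp (f.coeff.support.max'_mem hs)
  have he0 : f.coeff e ≠ 0 := Finsupp.mem_support_iff.mp (f.coeff.support.min'_mem hs)
  have hne : f.coeff d * (starL f).coeff (-e) ≠ 0 := by
    rw [starL_apply, neg_neg]
    exact mul_ne_zero hd0 (by simpa using he0)
  have hde : d = e := by
    by_contra hne'
    apply hne
    rw [← hcoeff, AddMonoidAlgebra.one_def, AddMonoidAlgebra.coeff_single, Finsupp.single_apply,
      if_neg (by omega)]
  have hsub : f.coeff.support ⊆ {d} := by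
    intro a ha
    have h1 : a ≤ d := Finset.le_max' _ _ ha
    have h2 : e ≤ a := Finset.min'_le _ _ ha
    simp only [Finset.mem_singleton]
    omega
  refine ⟨d, f.coeff d, AddMonoidAlgebra.coeff_injective (Finsupp.eq_single_iff.mpr ⟨hsub, rfl⟩), ?_⟩
  have h1 : (1 : L).coeff (d + -e) = 1 := by
    rw [AddMonoidAlgebra.one_def, AddMonoidAlgebra.coeff_single, Finsupp.single_apply,
      if_pos (by omega)]
  rw [h1, starL_apply, neg_neg, ← hde] at hcoeff
  exact hcoeff.symm

end Positivity

section Inductions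

lemma su_induction (q : ℝ) (p : SU q → Prop)
    (h0 : p 0) (h1 : p 1)
    (hadd : ∀ x y, p x → p y → p (x + y)) (hsmul : ∀ (c : ℂ) x, p x → p (c • x))
    (hA : ∀ x, p x → p (αg q * x)) (hB : ∀ x, p x → p (βg q * x))
    (hAs : ∀ x, p x → p (star (αg q) * x)) (hBs : ∀ x, p x → p (star (βg q) * x)) :
    ∀ x, p x := by
  intro x
  obtain ⟨f, rfl⟩ := RingQuot.mkAlgHom_surjective ℂ (surel q) x
  induction f using MonoidAlgebra.induction with
  | zero => simpa using h0
  | single_add w c f hw hc ih =>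
    rw [map_add]
    refine hadd _ _ ?_ ih
    have hw1 : ∀ v : FreeMonoid (Gen (Fin 2)),
        p (RingQuot.mkAlgHom ℂ (surel q) (MonoidAlgebra.single v 1)) := by
      intro v
      induction v using FreeMonoid.inductionOn' with
      | one =>
        have : (MonoidAlgebra.single (1 : FreeMonoid (Gen (Fin 2))) (1:ℂ)) = 1 :=
          (MonoidAlgebra.one_def).symm
        rw [this, map_one]
        exact h1
      | of_mul b v ihv =>
        have hsplit : MonoidAlgebra.single (FreeMonoid.of b * v) (1:ℂ)
            = MonoidAlgebra.single (FreeMonoid.of b) 1 * MonoidAlgebra.single v 1 := by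
          rw [MonoidAlgebra.single_mul_single, one_mul]
        rw [hsplit, map_mul]
        rcases b with i | i
        · fin_cases i
          · exact hA _ ihv
          · exact hB _ ihv
        · fin_cases i
          · have hcast : RingQuot.mkAlgHom ℂ (surel q)
                (MonoidAlgebra.single (FreeMonoid.of (Sum.inr (0 : Fin 2))) (1:ℂ)) = star (αg q) := by
              rw [star_αg]
              rfl
            have hgoal := hAs _ ihv
            rw [← hcast] at hgoal
            exact hgoal
          · have hcast : RingQuot.mkAlgHom ℂ (surel q)
                (MonoidAlgebra.single (FreeMonoid.of (Sum.inr (1 : Fin 2))) (1:ℂ)) = star (βg q) := by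
              rw [star_βg]
              rfl
            have hgoal := hBs _ ihv
            rw [← hcast] at hgoal
            exact hgoal
    have hsc : (MonoidAlgebra.single w c : F (Fin 2)) = c • MonoidAlgebra.single w (1:ℂ) := by
      rw [MonoidAlgebra.smul_single, smul_eq_mul, mul_one]
    rw [hsc, map_smul]
    exact hsmul _ _ (hw1 w)

lemma sphere_induction (n : ℕ) (q : ℝ) (p : Sphere n q → Prop)
    (h0 : p 0) (h1 : p 1)
    (hadd : ∀ x y, p x → p y → p (x + y)) (hsmul : ∀ (c : ℂ) x, p x → p (c • x))
    (hz : ∀ i x, p x → p (z n q i * x))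
    (hzs : ∀ i x, p x → p (star (z n q i) * x)) :
    ∀ x, p x := by
  intro x
  obtain ⟨f, rfl⟩ := RingQuot.mkAlgHom_surjective ℂ (srel n q) x
  induction f using MonoidAlgebra.induction with
  | zero => simpa using h0
  | single_add w c f hw hc ih =>
    rw [map_add]
    refine hadd _ _ ?_ ih
    have hw1 : ∀ v : FreeMonoid (Gen (Fin (n+1))),
        p (RingQuot.mkAlgHom ℂ (srel n q) (MonoidAlgebra.single v 1)) := by
      intro v
      induction v using FreeMonoid.inductionOn' with
      | one =>
        have : (MonoidAlgebra.single (1 : FreeMonoid (Gen (Fin (n+1)))) (1:ℂ)) = 1 :=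
          (MonoidAlgebra.one_def).symm
        rw [this, map_one]
        exact h1
      | of_mul b v ihv =>
        have hsplit : MonoidAlgebra.single (FreeMonoid.of b * v) (1:ℂ)
            = MonoidAlgebra.single (FreeMonoid.of b) 1 * MonoidAlgebra.single v 1 := by
          rw [MonoidAlgebra.single_mul_single, one_mul]
        rw [hsplit, map_mul]
        rcases b with i | i
        · exact hz i _ ihv
        · have hcast : RingQuot.mkAlgHom ℂ (srel n q)
              (MonoidAlgebra.single (FreeMonoid.of (Sum.inr i)) (1:ℂ)) = star (z n q i) := by
            rw [star_z]
            rfl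
          rw [hcast]
          exact hzs i _ ihv
    have hsc : (MonoidAlgebra.single w c : F (Fin (n+1))) = c • MonoidAlgebra.single w (1:ℂ) := by
      rw [MonoidAlgebra.smul_single, smul_eq_mul, mul_one]
    rw [hsc, map_smul]
    exact hsmul _ _ (hw1 w)

end Inductions

section Sec

/-- linear section sending `T m` to `e m 0 0`. -/
def sec (q : ℝ) (f : L) : SU q := f.coeff.sum fun m c => c • e q m 0 0

lemma sec_zero (q : ℝ) : sec q 0 = 0 := by
  unfold sec; rw [AddMonoidAlgebra.coeff_zero]; exact Finsupp.sum_zero_index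

lemma sec_single (q : ℝ) (m : ℤ) (c : ℂ) :
    sec q ((AddMonoidAlgebra.single m c : L)) = c • e q m 0 0 := by
  unfold sec; rw [AddMonoidAlgebra.coeff_single]; exact Finsupp.sum_single_index (zero_smul _ _)

lemma sec_add (q : ℝ) (f g : L) : sec q (f + g) = sec q f + sec q g := by
  unfold sec; rw [AddMonoidAlgebra.coeff_add]; exact Finsupp.sum_add_index' (fun m => zero_smul _ _) (fun m c₁ c₂ => add_smul _ _ _)

lemma sec_smul (q : ℝ) (c : ℂ) (f : L) : sec q (c • f) = c • sec q f := by
  unfold sec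
  rw [AddMonoidAlgebra.coeff_smul, Finsupp.sum_smul_index' (fun m => zero_smul ℂ (e q m 0 0)), Finsupp.smul_sum]
  exact Finsupp.sum_congr fun m _ => by rw [smul_eq_mul, mul_smul]

lemma sec_one (q : ℝ) : sec q 1 = 1 := by
  rw [AddMonoidAlgebra.one_def, sec_single, e_nonneg q le_rfl]
  simp

lemma T_mul_single (m m' : ℤ) (c : ℂ) :
    T m * AddMonoidAlgebra.single m' c = AddMonoidAlgebra.single (m + m') c := by
  rw [show T m = AddMonoidAlgebra.single m 1 from rfl, AddMonoidAlgebra.single_mul_single, one_mul]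

lemma hsecA (q : ℝ) (f : L) : αg q * sec q f - sec q (T 1 * f) ∈ V q 1 := by
  classical
  induction f using AddMonoidAlgebra.induction with
  | zero => rw [sec_zero, mul_zero, mul_zero, sec_zero, sub_zero]; exact zero_mem _
  | single_add m c f _ _ ih =>
    rw [mul_add, sec_add, mul_add, sec_add]
    have key : ∀ a b : L, αg q * sec q a + αg q * sec q b
        - (sec q (T 1 * a) + sec q (T 1 * b))
        = (αg q * sec q a - sec q (T 1 * a)) + (αg q * sec q b - sec q (T 1 * b)) := by
      intro a b
      abel
    rw [key]
    refine add_mem ?_ ih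
    rw [sec_single, T_mul_single, sec_single, mul_smul_comm]
    rcases le_or_gt 0 m with hm | hm
    · rw [MA_nonneg q hm, show (1:ℤ) + m = m + 1 by ring, sub_self]
      exact zero_mem _
    · have hMA := MA_neg q hm 0 0
      rw [pow_zero, one_smul] at hMA
      rw [hMA, show (1:ℤ) + m = m + 1 by ring]
      have key2 : c • (e q (m+1) 0 0 - e q (m+1) (0+1) (0+1)) - c • e q (m+1) 0 0
          = -(c • e q (m+1) (0+1) (0+1)) := by module
      rw [key2]
      exact neg_mem (Submodule.smul_mem _ _ (e_mem_V q _ _ _ _ (by omega)))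

lemma hsecAs (q : ℝ) (f : L) :
    star (αg q) * sec q f - sec q (T (-1) * f) ∈ V q 1 := by
  classical
  induction f using AddMonoidAlgebra.induction with
  | zero => rw [sec_zero, mul_zero, mul_zero, sec_zero, sub_zero]; exact zero_mem _
  | single_add m c f _ _ ih =>
    rw [mul_add, sec_add, mul_add, sec_add]
    have key : ∀ a b : L, star (αg q) * sec q a + star (αg q) * sec q b
        - (sec q (T (-1) * a) + sec q (T (-1) * b))
        = (star (αg q) * sec q a - sec q (T (-1) * a))
          + (star (αg q) * sec q b - sec q (T (-1) * b)) := by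
      intro a b
      abel
    rw [key]
    refine add_mem ?_ ih
    rw [sec_single, T_mul_single, sec_single, mul_smul_comm, show (-1:ℤ) + m = m - 1 by ring]
    rcases le_or_gt m 0 with hm | hm
    · have hMAs := MAs_nonpos q hm 0 0
      rw [pow_zero, one_smul] at hMAs
      rw [hMAs, sub_self]
      exact zero_mem _
    · rw [MAs_pos q hm]
      have key2 : c • (e q (m-1) 0 0 - (q:ℂ)^(2*m.toNat) • e q (m-1) (0+1) (0+1))
            - c • e q (m-1) 0 0
          = -(c • ((q:ℂ)^(2*m.toNat) • e q (m-1) (0+1) (0+1))) := by module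
      rw [key2]
      exact neg_mem (Submodule.smul_mem _ _ (Submodule.smul_mem _ _ (e_mem_V q _ _ _ _ (by omega))))

lemma hsecB (q : ℝ) (f : L) : βg q * sec q f ∈ V q 1 := by
  classical
  induction f using AddMonoidAlgebra.induction with
  | zero => rw [sec_zero, mul_zero]; exact zero_mem _
  | single_add m c f _ _ ih =>
    rw [sec_add, mul_add]
    refine add_mem ?_ ih
    rw [sec_single, mul_smul_comm, MB q m 0 0]
    exact Submodule.smul_mem _ _ (Submodule.smul_mem _ _ (e_mem_V q _ _ _ _ (by omega)))

lemma hsecBs (q : ℝ) (f : L) : star (βg q) * sec q f ∈ V q 1 := by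
  classical
  induction f using AddMonoidAlgebra.induction with
  | zero => rw [sec_zero, mul_zero]; exact zero_mem _
  | single_add m c f _ _ ih =>
    rw [sec_add, mul_add]
    refine add_mem ?_ ih
    rw [sec_single, mul_smul_comm, MBs q m 0 0]
    exact Submodule.smul_mem _ _ (Submodule.smul_mem _ _ (e_mem_V q _ _ _ _ (by omega)))

lemma sub_sec_mem (q : ℝ) (hq : q ≠ 0) (x : SU q) : x - sec q (piL q x) ∈ V q 1 := by
  induction x using su_induction with
  | h0 => rw [map_zero, sec_zero, sub_zero]; exact zero_mem _
  | h1 => rw [map_one, sec_one, sub_self]; exact zero_mem _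
  | hadd x y hx hy =>
    rw [map_add, sec_add]
    have key : x + y - (sec q (piL q x) + sec q (piL q y))
        = (x - sec q (piL q x)) + (y - sec q (piL q y)) := by abel
    rw [key]
    exact add_mem hx hy
  | hsmul c x hx =>
    rw [map_smul, sec_smul]
    have key : c • x - c • sec q (piL q x) = c • (x - sec q (piL q x)) := by module
    rw [key]
    exact Submodule.smul_mem _ _ hx
  | hA x hx =>
    rw [map_mul, piL_A]
    have key : αg q * x - sec q (T 1 * piL q x)
        = αg q * (x - sec q (piL q x)) + (αg q * sec q (piL q x) - sec q (T 1 * piL q x)) := by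
      rw [mul_sub]; abel
    rw [key]
    exact add_mem (mulA_mem_V1 q hq hx) (hsecA q _)
  | hB x hx =>
    rw [map_mul, piL_B, zero_mul, sec_zero, sub_zero]
    have key : βg q * x
        = βg q * (x - sec q (piL q x)) + βg q * sec q (piL q x) := by
      rw [mul_sub]; abel
    rw [key]
    exact add_mem (mulB_mem_V1 q hx) (hsecB q _)
  | hAs x hx =>
    rw [map_mul, piL_As]
    have key : star (αg q) * x - sec q (T (-1) * piL q x)
        = star (αg q) * (x - sec q (piL q x))
          + (star (αg q) * sec q (piL q x) - sec q (T (-1) * piL q x)) := by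
      rw [mul_sub]; abel
    rw [key]
    exact add_mem (mulAs_mem_V1 q hx) (hsecAs q _)
  | hBs x hx =>
    rw [map_mul, piL_Bs, zero_mul, sec_zero, sub_zero]
    have key : star (βg q) * x
        = star (βg q) * (x - sec q (piL q x)) + star (βg q) * sec q (piL q x) := by
      rw [mul_sub]; abel
    rw [key]
    exact add_mem (mulBs_mem_V1 q hx) (hsecBs q _)

end Sec

/-- For `0 ≤ q < 1` and `0 < q' < 1`, every surjective unital
*-homomorphism `φ : A(S^{2n+1}_q) → A(SU_{q'}(2))` satisfies
`φ(z 0) = λ α + x` or `φ(z 0) = λ α* + x` with `|λ| = 1` and `x ∈ V₁`. -/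
theorem surjective_hom_apply_z_zero (n : ℕ) (hn : 1 ≤ n) (q q' : ℝ)
    (hq0 : 0 ≤ q) (hq1 : q < 1) (hq'0 : 0 < q') (hq'1 : q' < 1)
    (φ : Sphere n q →⋆ₐ[ℂ] SU q') (hφ : Function.Surjective φ) :
    ∃ (l : ℂ) (x : SU q'), ‖l‖ = 1 ∧ x ∈ V q' 1 ∧
      (φ (z n q 0) = l • αg q' + x ∨ φ (z n q 0) = l • star (αg q') + x) := by
  classical
  set ψ : Sphere n q →ₐ[ℂ] L := (piL q').comp φ.toAlgHom with hψdef
  have hψapp : ∀ x, ψ x = piL q' (φ x) := fun x => rfl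
  have hψs : Function.Surjective ψ := by
    intro f
    obtain ⟨y, hy⟩ := piL_surjective q' f
    obtain ⟨x, hx⟩ := hφ y
    exact ⟨x, by rw [hψapp, hx, hy]⟩
  have hψstar : ∀ x, ψ (star x) = starL (ψ x) := by
    intro x
    rw [hψapp, hψapp, map_star, piL_star]
  set u : Fin (n+1) → L := fun i => ψ (z n q i) with hudef
  have hmk : ∀ i, RingQuot.mkAlgHom ℂ (srel n q) (zsF i) = star (z n q i) :=
    fun i => (star_z n q i).symm
  have hzz : ∀ i, RingQuot.mkAlgHom ℂ (srel n q) (zF i) = z n q i := fun i => rfl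
  -- the two relations in the sphere algebra
  have h1 : star (z n q 0) * z n q 0
      = z n q 0 * star (z n q 0)
        + ((1 - q^2 : ℝ) : ℂ) • ∑ j ∈ Finset.Ioi (0 : Fin (n+1)), z n q j * star (z n q j) := by
    have h := RingQuot.mkAlgHom_rel ℂ (srel.ccr (n := n) (q := q) 0)
    rw [map_mul, map_add, map_smul, map_mul, map_sum] at h
    simp only [map_mul, hmk, hzz] at h
    exact h
  have h2 : ∑ j, z n q j * star (z n q j) = 1 := by
    have h := RingQuot.mkAlgHom_rel ℂ (srel.sphere_eq (n := n) (q := q))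
    rw [map_sum, map_one] at h
    simp only [map_mul, hmk, hzz] at h
    exact h
  -- push them into L
  have hu1 : starL (u 0) * u 0
      = u 0 * starL (u 0)
        + ((1 - q^2 : ℝ) : ℂ) • ∑ j ∈ Finset.Ioi (0 : Fin (n+1)), u j * starL (u j) := by
    have h := congrArg ψ h1
    rw [map_mul, map_add, map_smul, map_sum] at h
    simp only [map_mul, hψstar] at h
    exact h
  have hu2 : ∑ j, u j * starL (u j) = 1 := by
    have h := congrArg ψ h2
    rw [map_sum, map_one] at h
    simp only [map_mul, hψstar] at h
    exact h
  have hS : ∑ j ∈ Finset.Ioi (0 : Fin (n+1)), u j * starL (u j) = 0 := by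
    have hc : ((1 - q^2 : ℝ) : ℂ) ≠ 0 := by
      simp only [ne_eq, Complex.ofReal_eq_zero]
      nlinarith
    have h0 : ((1 - q^2 : ℝ) : ℂ)
        • ∑ j ∈ Finset.Ioi (0 : Fin (n+1)), u j * starL (u j) = 0 := by
      have h := hu1
      rw [mul_comm (starL (u 0)) (u 0)] at h
      exact (left_eq_add.mp h)
    exact (smul_eq_zero.mp h0).resolve_left hc
  have huj : ∀ j ∈ Finset.Ioi (0 : Fin (n+1)), u j = 0 := eq_zero_of_sum_mul_star _ _ hS
  have huj' : ∀ j : Fin (n+1), j ≠ 0 → u j = 0 := by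
    intro j hj
    exact huj j (Finset.mem_Ioi.mpr (Fin.pos_iff_ne_zero.mpr hj))
  have hu0 : u 0 * starL (u 0) = 1 := by
    have hsplit : ∑ j, u j * starL (u j)
        = u 0 * starL (u 0) + ∑ j ∈ Finset.univ.erase (0 : Fin (n+1)), u j * starL (u j) :=
      (Finset.add_sum_erase _ _ (Finset.mem_univ 0)).symm
    have herase : ∑ j ∈ Finset.univ.erase (0 : Fin (n+1)), u j * starL (u j) = 0 := by
      refine Finset.sum_eq_zero fun j hj => ?_
      rw [huj' j (Finset.mem_erase.mp hj).1, zero_mul]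
    rw [hsplit, herase, add_zero] at hu2
    exact hu2
  obtain ⟨d, c, hfd, hc1⟩ := eq_single_of_mul_star_eq_one hu0
  have habs : ‖c‖ = 1 := by
    rw [Complex.mul_conj] at hc1
    have hn1 : Complex.normSq c = 1 := by exact_mod_cast hc1
    have : ‖c‖ ^ 2 = 1 := by rw [← Complex.normSq_eq_norm_sq, hn1]
    rw [← Real.sqrt_sq (norm_nonneg c), this, Real.sqrt_one]
  -- every element of the range of ψ has support divisible by d
  have hgen : ∀ i, ∀ a ∈ (u i).coeff.support, d ∣ a := by
    intro i a ha
    by_cases hi : i = 0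
    · subst hi
      rw [hfd, AddMonoidAlgebra.coeff_single] at ha
      have h := Finsupp.support_single_subset ha
      simp only [Finset.mem_singleton] at h
      rw [h]
    · rw [huj' i hi] at ha
      simp at ha
  have hdvd : ∀ x : Sphere n q, ∀ m ∈ (ψ x).coeff.support, d ∣ m := by
    intro x
    induction x using sphere_induction with
    | h0 =>
      intro m hm
      rw [map_zero] at hm
      simp at hm
    | h1 =>
      intro m hm
      rw [map_one, AddMonoidAlgebra.one_def, AddMonoidAlgebra.coeff_single] at hm
      have h := Finsupp.support_single_subset hm
      simp only [Finset.mem_singleton] at h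
      subst h
      exact dvd_zero d
    | hadd x y hx hy =>
      intro m hm
      rw [map_add, AddMonoidAlgebra.coeff_add] at hm
      rcases Finset.mem_union.mp (Finsupp.support_add hm) with h | h
      · exact hx m h
      · exact hy m h
    | hsmul c' x hx =>
      intro m hm
      rw [map_smul, AddMonoidAlgebra.coeff_smul] at hm
      exact hx m (Finsupp.support_smul hm)
    | hz i x hx =>
      intro m hm
      rw [map_mul] at hm
      obtain ⟨a, ha, b, hb, hab⟩ := Finset.mem_add.mp (AddMonoidAlgebra.support_coeff_mul_subset _ _ hm)
      rw [← hab]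
      exact dvd_add (hgen i a ha) (hx b hb)
    | hzs i x hx =>
      intro m hm
      rw [map_mul, hψstar] at hm
      obtain ⟨a, ha, b, hb, hab⟩ := Finset.mem_add.mp (AddMonoidAlgebra.support_coeff_mul_subset _ _ hm)
      rw [← hab]
      refine dvd_add ?_ (hx b hb)
      have h := (starL_support _ _).mp ha
      exact dvd_neg.mp (hgen i (-a) h)
  obtain ⟨y, hy⟩ := hψs (T 1)
  have h1supp : (1:ℤ) ∈ (ψ y).coeff.support := by
    rw [hy, show T 1 = AddMonoidAlgebra.single 1 1 from rfl, AddMonoidAlgebra.coeff_single,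
      Finsupp.support_single_ne_zero _ one_ne_zero]
    simp
  have hd1 : d ∣ 1 := hdvd y 1 h1supp
  have hd : d = 1 ∨ d = -1 := Int.isUnit_iff.mp (isUnit_of_dvd_one hd1)
  have hsub := sub_sec_mem q' (ne_of_gt hq'0) (φ (z n q 0))
  have hπφ : piL q' (φ (z n q 0)) = AddMonoidAlgebra.single d c := by
    rw [← hψapp]
    exact hfd
  rcases hd with hd | hd
  · subst hd
    have he1 : e q' 1 0 0 = αg q' := by
      rw [e_nonneg q' (by norm_num : (0:ℤ) ≤ 1)]
      norm_num
    rw [hπφ, sec_single, he1] at hsub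
    refine ⟨c, φ (z n q 0) - c • αg q', habs, hsub, Or.inl ?_⟩
    module
  · subst hd
    have he1 : e q' (-1) 0 0 = star (αg q') := by
      rw [e_nonpos q' (by norm_num : (-1:ℤ) ≤ 0)]
      norm_num
    rw [hπφ, sec_single, he1] at hsub
    refine ⟨c, φ (z n q 0) - c • star (αg q'), habs, hsub, Or.inr ?_⟩
    module

end QAlg
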